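/- The set B is linearly independent over ℂ (hence it is a minimal generating set of the S-submodule span_S(B) of F), and its cardinality is m = n(n⁴ − 5n³ + 7n² − n − 2)/12. -/

import Mathlib

set_option maxRecDepth 10000
set_option maxHeartbeats 1000000



/-- Index set for the variables `x_{ij}` (`1 ≤ j < i ≤ n`, `0`-indexed). -/
abbrev PIdx (n : ℕ) := { p : Fin n × Fin n // p.2 < p.1 }

/-- The polynomial ring `S = ℂ[x_{ij} : j < i]`. -/
abbrev Sn (n : ℕ) := MvPolynomial (PIdx n) ℂ

/-- Index set for the basis `r_{ijk}` (`k < j < i`). -/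
abbrev TIdx (n : ℕ) := { t : Fin n × Fin n × Fin n // t.2.2 < t.2.1 ∧ t.2.1 < t.1 }

/-- The free `S`-module `F` with basis `{r_{ijk} : k < j < i}`. -/
abbrev Fn (n : ℕ) := TIdx n → Sn n

/-- The variable `x_{ij}` (for `j < i`). -/
noncomputable def Xv (n : ℕ) (i j : Fin n) (h : j < i) : Sn n := MvPolynomial.X ⟨(i, j), h⟩

/-- The basis element `r_{ijk}` of `F` (for `k < j < i`). -/
noncomputable def rGen (n : ℕ) (i j k : Fin n) (h1 : k < j) (h2 : j < i) : Fn n :=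
  Pi.single ⟨(i, j, k), h1, h2⟩ 1

/-- The generating set `B = ∪ B_{ijk}` of relations (`g₁,…,g₄, h₁,…,h₈` of the paper):
for each `k < j < i` and admissible `l₁ < k < l₂ < j < l₃ < i < l₄` and pairs `t < s`
with `{s,t} ∩ {i,j,k} = ∅`. -/
noncomputable def BSet (n : ℕ) : Set (Fn n) :=
  { w | ∃ (i j k : Fin n) (hkj : k < j) (hji : j < i),
    -- g₁
    (∃ (l : Fin n) (h1 : k < l) (h2 : l < j),
      w = (-Xv n j k hkj - Xv n l k h1) • rGen n i j l h2 hji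
          + Xv n j l h2 • rGen n i j k hkj hji) ∨
    -- g₂
    (∃ (l : Fin n) (_h1 : k < l) (h2 : l < j),
      w = Xv n j k hkj • rGen n i j l h2 hji
          + Xv n i l (h2.trans hji) • rGen n i j k hkj hji) ∨
    -- g₃
    (∃ (l : Fin n) (h1 : j < l) (h2 : l < i),
      w = -(Xv n j k hkj • rGen n i l j h1 h2)
          + Xv n i l h2 • rGen n i j k hkj hji) ∨
    -- g₄
    (∃ (l : Fin n) (h1 : i < l),
      w = Xv n j k hkj • rGen n l i j hji h1
          + Xv n l i h1 • rGen n i j k hkj hji) ∨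
    -- h₁
    (∃ (l : Fin n) (h1 : l < k),
      w = (Xv n i l (h1.trans (hkj.trans hji)) + Xv n j l (h1.trans hkj) + Xv n k l h1) •
          rGen n i j k hkj hji) ∨
    -- h₂
    (w = (Xv n i k (hkj.trans hji) + Xv n j k hkj) • rGen n i j k hkj hji) ∨
    -- h₃
    (∃ (l : Fin n) (h1 : k < l) (_h2 : l < j), w = Xv n l k h1 • rGen n i j k hkj hji) ∨
    -- h₄
    (∃ (l : Fin n) (h1 : j < l) (_h2 : l < i),
      w = Xv n l k (hkj.trans h1) • rGen n i j k hkj hji) ∨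
    -- h₅
    (∃ (l : Fin n) (h1 : j < l) (_h2 : l < i), w = Xv n l j h1 • rGen n i j k hkj hji) ∨
    -- h₆
    (∃ (l : Fin n) (h1 : i < l),
      w = Xv n l k ((hkj.trans hji).trans h1) • rGen n i j k hkj hji) ∨
    -- h₇
    (∃ (l : Fin n) (h1 : i < l), w = Xv n l j (hji.trans h1) • rGen n i j k hkj hji) ∨
    -- h₈
    (∃ (s t : Fin n) (h : t < s), s ≠ i ∧ s ≠ j ∧ s ≠ k ∧ t ≠ i ∧ t ≠ j ∧ t ≠ k ∧
      w = Xv n s t h • rGen n i j k hkj hji) }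

/-- The `S`-submodule of `F` spanned by `B`. -/
noncomputable def spanB (n : ℕ) : Submodule (Sn n) (Fn n) := Submodule.span (Sn n) (BSet n)

/-- The infinitesimal Alexander invariant `𝔅ₙ = F / span_S(B)` of `PΣₙ⁺`. -/
abbrev Bn (n : ℕ) := Fn n ⧸ spanB n

namespace BProof
open MvPolynomial Finset

noncomputable def XX (n : ℕ) (a b : Fin n) : Sn n :=
  if h : b < a then MvPolynomial.X ⟨(a, b), h⟩ else 0

noncomputable def sing (n : ℕ) (i j k : Fin n) (c : Sn n) : Fn n :=
  if h : k < j ∧ j < i then Pi.single ⟨(i, j, k), h.1, h.2⟩ c else 0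

noncomputable def lam {n : ℕ} (p : PIdx n) (t : TIdx n) (w : Fn n) : ℂ :=
  MvPolynomial.coeff (Finsupp.single p 1) (w t)

lemma lam_add {n : ℕ} (p : PIdx n) (t : TIdx n) (w w' : Fn n) :
    lam p t (w + w') = lam p t w + lam p t w' := by
  simp [lam, MvPolynomial.coeff_add]

lemma lam_smul {n : ℕ} (p : PIdx n) (t : TIdx n) (c : ℂ) (w : Fn n) :
    lam p t (c • w) = c * lam p t w := by
  simp [lam, MvPolynomial.coeff_smul]

lemma lam_sing {n : ℕ} (p : PIdx n) (t : TIdx n) (i j k : Fin n) (c : Sn n) :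
    lam p t (sing n i j k c) =
      if t.1 = (i, j, k) then MvPolynomial.coeff (Finsupp.single p 1) c else 0 := by
  unfold lam sing
  split_ifs with h h2 h2
  · rw [Pi.single_apply]
    rw [if_pos]
    exact Subtype.ext h2
  · rw [Pi.single_apply, if_neg, MvPolynomial.coeff_zero]
    intro hc; exact h2 (congrArg Subtype.val hc)
  · exfalso; have ht := t.2; rw [h2] at ht; exact h ⟨ht.1, ht.2⟩
  · simp

lemma coeff_XX {n : ℕ} (p : PIdx n) (a b : Fin n) :
    MvPolynomial.coeff (Finsupp.single p 1) (XX n a b) =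
      if p.1 = (a, b) then 1 else 0 := by
  unfold XX
  split_ifs with h h2 h2
  · rw [MvPolynomial.coeff_X', if_pos]
    congr 1
    exact (Subtype.ext h2).symm
  · rw [MvPolynomial.coeff_X', if_neg]
    intro hc
    exact h2 (congrArg Subtype.val (Finsupp.single_left_injective one_ne_zero hc)).symm
  · exfalso; have hp := p.2; rw [h2] at hp; exact h hp
  · simp
noncomputable def Psi (n : ℕ) (a b i j k : Fin n) : Fn n :=
  if (a : ℕ) = i then
    (if (b : ℕ) < k then sing n i j k (XX n i b + XX n j b + XX n k b)
     else if (b : ℕ) = k then sing n i j k (XX n i k + XX n j k)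
     else if (b : ℕ) < j then sing n i j k (XX n i b) + sing n i j b (XX n j k)
     else sing n i j k (XX n i b) + sing n i b j (-(XX n j k)))
  else if (a : ℕ) = j then sing n i j k (XX n j b) + sing n i j b (-(XX n j k) - XX n b k)
  else if (b : ℕ) = i then sing n i j k (XX n a i) + sing n a i j (XX n j k)
  else sing n i j k (XX n a b)

def admN (a b i j k : ℕ) : Prop :=
  b < a ∧ k < j ∧ j < i ∧ ¬(a = i ∧ b = j) ∧ ¬(a = j ∧ b ≤ k) ∧ a ≠ k

def AdmP {n : ℕ} (a b i j k : Fin n) : Prop := admN a b i j k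

lemma lam_sing' {n : ℕ} (a b i j k : Fin n) (hba : b < a) (ht : k < j ∧ j < i)
    (i' j' k' : Fin n) (c : Sn n) :
    lam ⟨(a, b), hba⟩ ⟨(i, j, k), ht⟩ (sing n i' j' k' c) =
      if (i : ℕ) = i' ∧ (j : ℕ) = j' ∧ (k : ℕ) = k' then
        MvPolynomial.coeff (Finsupp.single ⟨(a, b), hba⟩ 1) c else 0 := by
  rw [lam_sing]
  congr 1
  simp [Prod.ext_iff, Fin.ext_iff]

lemma coeff_XX' {n : ℕ} (a b : Fin n) (hba : b < a) (a' b' : Fin n) :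
    MvPolynomial.coeff (Finsupp.single (⟨(a, b), hba⟩ : PIdx n) 1) (XX n a' b') =
      if (a : ℕ) = a' ∧ (b : ℕ) = b' then 1 else 0 := by
  rw [coeff_XX]
  congr 1
  simp [Prod.ext_iff, Fin.ext_iff]

lemma lam_Psi_self {n : ℕ} (a b i j k : Fin n) (hba : b < a) (hkj : k < j) (hji : j < i)
    (had : AdmP a b i j k) :
    lam ⟨(a, b), hba⟩ ⟨(i, j, k), hkj, hji⟩ (Psi n a b i j k) = 1 := by
  obtain ⟨-, -, -, h4, h5, h6⟩ := had
  have hba' : (b : ℕ) < a := hba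
  have hkj' : (k : ℕ) < j := hkj
  have hji' : (j : ℕ) < i := hji
  unfold Psi
  split_ifs <;>
    simp only [lam_add, lam_sing', MvPolynomial.coeff_add, MvPolynomial.coeff_neg,
      MvPolynomial.coeff_sub, coeff_XX', and_true, true_and] <;>
    split_ifs <;> first | omega | norm_num

lemma lam_Psi_ne {n : ℕ} (a b i j k a' b' i' j' k' : Fin n)
    (hba : b < a) (hkj : k < j) (hji : j < i)
    (had : AdmP a b i j k) (had' : AdmP a' b' i' j' k')
    (hne : ¬((a : ℕ) = a' ∧ (b : ℕ) = b' ∧ (i : ℕ) = i' ∧ (j : ℕ) = j' ∧ (k : ℕ) = k')) :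
    lam ⟨(a, b), hba⟩ ⟨(i, j, k), hkj, hji⟩ (Psi n a' b' i' j' k') = 0 := by
  obtain ⟨-, -, -, h4, h5, h6⟩ := had
  obtain ⟨hba', hkj', hji', h4', h5', h6'⟩ := had'
  have hba2 : (b : ℕ) < a := hba
  have hkj2 : (k : ℕ) < j := hkj
  have hji2 : (j : ℕ) < i := hji
  unfold Psi
  split_ifs <;>
    simp only [lam_add, lam_sing', MvPolynomial.coeff_add, MvPolynomial.coeff_neg,
      MvPolynomial.coeff_sub, coeff_XX', and_true, true_and] <;>
    split_ifs <;> first | omega | norm_num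
lemma XX_eq {n : ℕ} (a b : Fin n) (h : b < a) : XX n a b = Xv n a b h := dif_pos h

lemma sing_eq {n : ℕ} (i j k : Fin n) (h1 : k < j) (h2 : j < i) (c : Sn n) :
    sing n i j k c = c • rGen n i j k h1 h2 := by
  unfold sing rGen
  rw [dif_pos ⟨h1, h2⟩]
  funext t
  simp only [Pi.smul_apply, Pi.single_apply, smul_eq_mul, mul_ite, mul_one, mul_zero]

def AdmQ {n : ℕ} (q : PIdx n × TIdx n) : Prop :=
  AdmP q.1.1.1 q.1.1.2 q.2.1.1 q.2.1.2.1 q.2.1.2.2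

noncomputable def PsiQ {n : ℕ} (q : PIdx n × TIdx n) : Fn n :=
  Psi n q.1.1.1 q.1.1.2 q.2.1.1 q.2.1.2.1 q.2.1.2.2

lemma psi_mem_BSet {n : ℕ} (q : PIdx n × TIdx n) (hq : AdmQ q) : PsiQ q ∈ BSet n := by
  obtain ⟨⟨⟨a, b⟩, hba⟩, ⟨⟨i, j, k⟩, hkj, hji⟩⟩ := q
  dsimp only [AdmQ, AdmP, admN] at hq
  obtain ⟨hba', hkj', hji', h4, h5, h6⟩ := hq
  simp only [PsiQ, Psi]
  refine ⟨i, j, k, hkj, hji, ?_⟩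
  by_cases hai : (a : ℕ) = i
  · rw [if_pos hai]
    by_cases hbk : (b : ℕ) < k
    · rw [if_pos hbk]
      have hbk' : b < k := by omega
      refine Or.inr (Or.inr (Or.inr (Or.inr (Or.inl ⟨b, hbk', ?_⟩))))
      rw [sing_eq _ _ _ hkj hji, XX_eq _ _ (show b < i by omega),
        XX_eq _ _ (show b < j by omega), XX_eq _ _ hbk']
    · rw [if_neg hbk]
      by_cases hbk2 : (b : ℕ) = k
      · rw [if_pos hbk2]
        refine Or.inr (Or.inr (Or.inr (Or.inr (Or.inr (Or.inl ?_)))))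
        have : b = k := by omega
        subst this
        rw [sing_eq _ _ _ hkj hji, XX_eq _ _ (hkj.trans hji), XX_eq _ _ hkj]
      · rw [if_neg hbk2]
        by_cases hbj : (b : ℕ) < j
        · rw [if_pos hbj]
          have h1 : k < b := by omega
          have h2 : b < j := by omega
          refine Or.inr (Or.inl ⟨b, h1, h2, ?_⟩)
          rw [sing_eq _ _ _ hkj hji, sing_eq _ _ _ h2 hji, XX_eq _ _ hkj,
            XX_eq _ _ (h2.trans hji)]
          exact add_comm _ _
        · rw [if_neg hbj]
          have h1 : j < b := by omega
          have h2 : b < i := by omega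
          refine Or.inr (Or.inr (Or.inl ⟨b, h1, h2, ?_⟩))
          rw [sing_eq _ _ _ hkj hji, sing_eq _ _ _ h1 h2, XX_eq _ _ hkj, XX_eq _ _ h2,
            neg_smul]
          rw [add_comm, ← neg_smul]
  · rw [if_neg hai]
    by_cases haj : (a : ℕ) = j
    · rw [if_pos haj]
      have hkb : k < b := by omega
      have hbj : b < j := by omega
      refine Or.inl ⟨b, hkb, hbj, ?_⟩
      have haj' : a = j := by omega
      subst haj'
      rw [sing_eq _ _ _ hkj hji, sing_eq _ _ _ hbj hji, XX_eq _ _ hkj, XX_eq _ _ hbj,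
        XX_eq _ _ hkb]
      rw [add_comm]
    · rw [if_neg haj]
      by_cases hbi : (b : ℕ) = i
      · rw [if_pos hbi]
        have hia : i < a := by omega
        have hbi' : b = i := by omega
        subst hbi'
        refine Or.inr (Or.inr (Or.inr (Or.inl ⟨a, hia, ?_⟩)))
        rw [sing_eq _ _ _ hkj hji, sing_eq _ _ _ hji hia, XX_eq _ _ hkj, XX_eq _ _ hia]
        exact add_comm _ _
      · rw [if_neg hbi]
        rw [sing_eq _ _ _ hkj hji, XX_eq _ _ hba]
        by_cases hbj : (b : ℕ) = j
        · have hbj' : b = j := by omega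
          subst hbj'
          by_cases hal : (a : ℕ) < i
          · exact Or.inr (Or.inr (Or.inr (Or.inr (Or.inr (Or.inr (Or.inr (Or.inr
              (Or.inl ⟨a, hba, by omega, rfl⟩))))))))
          · exact Or.inr (Or.inr (Or.inr (Or.inr (Or.inr (Or.inr (Or.inr (Or.inr
              (Or.inr (Or.inr (Or.inl ⟨a, by omega, rfl⟩))))))))))
        · by_cases hbk : (b : ℕ) = k
          · have hbk' : b = k := by omega
            subst hbk'
            by_cases ha1 : (a : ℕ) < j
            · exact Or.inr (Or.inr (Or.inr (Or.inr (Or.inr (Or.inr (Or.inl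
                ⟨a, hba, by omega, rfl⟩))))))
            · by_cases ha2 : (a : ℕ) < i
              · exact Or.inr (Or.inr (Or.inr (Or.inr (Or.inr (Or.inr (Or.inr (Or.inl
                  ⟨a, by omega, by omega, rfl⟩)))))))
              · exact Or.inr (Or.inr (Or.inr (Or.inr (Or.inr (Or.inr (Or.inr (Or.inr
                  (Or.inr (Or.inl ⟨a, by omega, rfl⟩)))))))))
          · refine Or.inr (Or.inr (Or.inr (Or.inr (Or.inr (Or.inr (Or.inr (Or.inr
              (Or.inr (Or.inr (Or.inr ⟨a, b, hba, ?_, ?_, ?_, ?_, ?_, ?_, rfl⟩))))))))))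
            all_goals omega

lemma BSet_subset {n : ℕ} (w : Fn n) (hw : w ∈ BSet n) :
    ∃ q : PIdx n × TIdx n, AdmQ q ∧ PsiQ q = w := by
  obtain ⟨i, j, k, hkj, hji, hw⟩ := hw
  rcases hw with ⟨l, h1, h2, rfl⟩ | ⟨l, h1, h2, rfl⟩ | ⟨l, h1, h2, rfl⟩ | ⟨l, h1, rfl⟩ |
    ⟨l, h1, rfl⟩ | rfl | ⟨l, h1, h2, rfl⟩ | ⟨l, h1, h2, rfl⟩ | ⟨l, h1, h2, rfl⟩ |
    ⟨l, h1, rfl⟩ | ⟨l, h1, rfl⟩ | ⟨s, t, h1, hs1, hs2, hs3, ht1, ht2, ht3, rfl⟩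
  -- g1 : q = ((j,l),(i,j,k))
  · refine ⟨⟨⟨(j, l), h2⟩, ⟨(i, j, k), hkj, hji⟩⟩, by unfold AdmQ AdmP admN; simp; omega, ?_⟩
    simp only [PsiQ, Psi]
    rw [if_neg (by omega), if_pos trivial]
    rw [sing_eq _ _ _ hkj hji, sing_eq _ _ _ h2 hji, XX_eq _ _ hkj, XX_eq _ _ h2,
      XX_eq _ _ h1]
    rw [add_comm]
  -- g2 : q = ((i,l),(i,j,k))
  · refine ⟨⟨⟨(i, l), h2.trans hji⟩, ⟨(i, j, k), hkj, hji⟩⟩,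
      by unfold AdmQ AdmP admN; simp; omega, ?_⟩
    simp only [PsiQ, Psi]
    rw [if_pos trivial, if_neg (by omega), if_neg (by omega), if_pos (by omega)]
    rw [sing_eq _ _ _ hkj hji, sing_eq _ _ _ h2 hji, XX_eq _ _ hkj,
      XX_eq _ _ (h2.trans hji)]
    exact add_comm _ _
  -- g3 : q = ((i,l),(i,j,k))
  · refine ⟨⟨⟨(i, l), h2⟩, ⟨(i, j, k), hkj, hji⟩⟩, by unfold AdmQ AdmP admN; simp; omega, ?_⟩
    simp only [PsiQ, Psi]
    rw [if_pos trivial, if_neg (by omega), if_neg (by omega), if_neg (by omega)]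
    rw [sing_eq _ _ _ hkj hji, sing_eq _ _ _ h1 h2, XX_eq _ _ hkj, XX_eq _ _ h2, neg_smul]
    rw [add_comm, ← neg_smul]
  -- g4 : q = ((l,i),(i,j,k))
  · refine ⟨⟨⟨(l, i), h1⟩, ⟨(i, j, k), hkj, hji⟩⟩, by unfold AdmQ AdmP admN; simp; omega, ?_⟩
    simp only [PsiQ, Psi]
    rw [if_neg (by omega), if_neg (by omega), if_pos trivial]
    rw [sing_eq _ _ _ hkj hji, sing_eq _ _ _ hji h1, XX_eq _ _ hkj, XX_eq _ _ h1]
    exact add_comm _ _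
  -- h1 : q = ((i,l),(i,j,k))
  · refine ⟨⟨⟨(i, l), h1.trans (hkj.trans hji)⟩, ⟨(i, j, k), hkj, hji⟩⟩,
      by unfold AdmQ AdmP admN; simp; omega, ?_⟩
    simp only [PsiQ, Psi]
    rw [if_pos trivial, if_pos (by omega)]
    rw [sing_eq _ _ _ hkj hji, XX_eq _ _ (h1.trans (hkj.trans hji)),
      XX_eq _ _ (h1.trans hkj), XX_eq _ _ h1]
  -- h2 : q = ((i,k),(i,j,k))
  · refine ⟨⟨⟨(i, k), hkj.trans hji⟩, ⟨(i, j, k), hkj, hji⟩⟩,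
      by unfold AdmQ AdmP admN; simp; omega, ?_⟩
    simp only [PsiQ, Psi]
    rw [if_pos trivial, if_neg (by omega), if_pos trivial]
    rw [sing_eq _ _ _ hkj hji, XX_eq _ _ (hkj.trans hji), XX_eq _ _ hkj]
  -- h3 : q = ((l,k),(i,j,k))
  · refine ⟨⟨⟨(l, k), h1⟩, ⟨(i, j, k), hkj, hji⟩⟩, by unfold AdmQ AdmP admN; simp; omega, ?_⟩
    simp only [PsiQ, Psi]
    rw [if_neg (by omega), if_neg (by omega), if_neg (by omega)]
    rw [sing_eq _ _ _ hkj hji, XX_eq _ _ h1]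
  -- h4
  · refine ⟨⟨⟨(l, k), hkj.trans h1⟩, ⟨(i, j, k), hkj, hji⟩⟩,
      by unfold AdmQ AdmP admN; simp; omega, ?_⟩
    simp only [PsiQ, Psi]
    rw [if_neg (by omega), if_neg (by omega), if_neg (by omega)]
    rw [sing_eq _ _ _ hkj hji, XX_eq _ _ (hkj.trans h1)]
  -- h5
  · refine ⟨⟨⟨(l, j), h1⟩, ⟨(i, j, k), hkj, hji⟩⟩, by unfold AdmQ AdmP admN; simp; omega, ?_⟩
    simp only [PsiQ, Psi]
    rw [if_neg (by omega), if_neg (by omega), if_neg (by omega)]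
    rw [sing_eq _ _ _ hkj hji, XX_eq _ _ h1]
  -- h6
  · refine ⟨⟨⟨(l, k), (hkj.trans hji).trans h1⟩, ⟨(i, j, k), hkj, hji⟩⟩,
      by unfold AdmQ AdmP admN; simp; omega, ?_⟩
    simp only [PsiQ, Psi]
    rw [if_neg (by omega), if_neg (by omega), if_neg (by omega)]
    rw [sing_eq _ _ _ hkj hji, XX_eq _ _ ((hkj.trans hji).trans h1)]
  -- h7
  · refine ⟨⟨⟨(l, j), hji.trans h1⟩, ⟨(i, j, k), hkj, hji⟩⟩,
      by unfold AdmQ AdmP admN; simp; omega, ?_⟩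
    simp only [PsiQ, Psi]
    rw [if_neg (by omega), if_neg (by omega), if_neg (by omega)]
    rw [sing_eq _ _ _ hkj hji, XX_eq _ _ (hji.trans h1)]
  -- h8
  · refine ⟨⟨⟨(s, t), h1⟩, ⟨(i, j, k), hkj, hji⟩⟩, by unfold AdmQ AdmP admN; simp; omega, ?_⟩
    simp only [PsiQ, Psi]
    rw [if_neg (by omega), if_neg (by omega), if_neg (by omega)]
    rw [sing_eq _ _ _ hkj hji, XX_eq _ _ h1]

lemma image_eq (n : ℕ) : PsiQ '' {q : PIdx n × TIdx n | AdmQ q} = BSet n := by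
  apply Set.Subset.antisymm
  · rintro w ⟨q, hq, rfl⟩
    exact psi_mem_BSet q hq
  · intro w hw
    obtain ⟨q, hq, hqe⟩ := BSet_subset w hw
    exact ⟨q, hq, hqe⟩

lemma lam_PsiQ {n : ℕ} (q q' : PIdx n × TIdx n) (hq : AdmQ q) (hq' : AdmQ q') :
    lam q.1 q.2 (PsiQ q') = if q = q' then 1 else 0 := by
  by_cases h : q = q'
  · subst h
    rw [if_pos rfl]
    obtain ⟨⟨⟨a, b⟩, hba⟩, ⟨⟨i, j, k⟩, hkj, hji⟩⟩ := q
    exact lam_Psi_self a b i j k hba hkj hji hq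
  · rw [if_neg h]
    obtain ⟨⟨⟨a, b⟩, hba⟩, ⟨⟨i, j, k⟩, hkj, hji⟩⟩ := q
    obtain ⟨⟨⟨a', b'⟩, hba'⟩, ⟨⟨i', j', k'⟩, hkj', hji'⟩⟩ := q'
    refine lam_Psi_ne a b i j k a' b' i' j' k' hba hkj hji hq hq' ?_
    rintro ⟨e1, e2, e3, e4, e5⟩
    refine h ?_
    have ha : a = a' := by omega
    have hb : b = b' := by omega
    have hi : i = i' := by omega
    have hj : j = j' := by omega
    have hk : k = k' := by omega
    subst ha hb hi hj hk
    rfl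

lemma lam_zero {n : ℕ} (p : PIdx n) (t : TIdx n) : lam p t 0 = 0 := by
  simp [lam]

lemma li_PsiQ (n : ℕ) :
    LinearIndependent ℂ (fun q : {q : PIdx n × TIdx n | AdmQ q} => PsiQ q.1) := by
  rw [linearIndependent_iff']
  intro s g hsum q hq
  have h1 : lam q.1.1 q.1.2 (∑ r ∈ s, g r • PsiQ r.1) = 0 := by
    rw [hsum, lam_zero]
  have h2 : lam q.1.1 q.1.2 (∑ r ∈ s, g r • PsiQ r.1)
      = ∑ r ∈ s, g r * lam q.1.1 q.1.2 (PsiQ r.1) := by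
    unfold lam
    rw [Finset.sum_apply, MvPolynomial.coeff_sum]
    exact Finset.sum_congr rfl fun r _ => by
      rw [Pi.smul_apply, MvPolynomial.coeff_smul, smul_eq_mul]
  rw [h2] at h1
  have h3 : ∀ r ∈ s, g r * lam q.1.1 q.1.2 (PsiQ r.1) = if r = q then g r else 0 := by
    intro r _
    rw [lam_PsiQ q.1 r.1 q.2 r.2]
    by_cases h : r = q
    · subst h; rw [if_pos rfl, if_pos rfl, mul_one]
    · rw [if_neg, if_neg h, mul_zero]
      exact fun hc => h (Subtype.ext hc.symm)
  rw [Finset.sum_congr rfl h3, Finset.sum_ite_eq' s q g, if_pos hq] at h1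
  exact h1

lemma li_BSet (n : ℕ) : LinearIndependent ℂ ((↑) : BSet n → Fn n) := by
  have h := (li_PsiQ n).linearIndepOn_id
  have he : Set.range (fun q : {q : PIdx n × TIdx n | AdmQ q} => PsiQ q.1) = BSet n := by
    rw [← Set.image_eq_range, image_eq]
  rw [← he]
  exact h

lemma injOn_PsiQ (n : ℕ) : Set.InjOn PsiQ {q : PIdx n × TIdx n | AdmQ q} := by
  intro q hq q' hq' he
  by_contra hne
  have h1 := lam_PsiQ q q hq hq
  rw [if_pos rfl] at h1
  have h2 := lam_PsiQ q q' hq hq'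
  rw [if_neg hne, ← he, h1] at h2
  exact one_ne_zero h2

lemma card_BSet (n : ℕ) :
    Nat.card (BSet n) = Nat.card {q : PIdx n × TIdx n | AdmQ q} := by
  rw [Nat.card_coe_set_eq, Nat.card_coe_set_eq, ← image_eq n,
    Set.ncard_image_of_injOn (injOn_PsiQ n)]

instance admN_dec (a b i j k : ℕ) : Decidable (admN a b i j k) := by
  unfold admN; infer_instance

def Cond (n : ℕ) (x : Fin n × Fin n × Fin n × Fin n × Fin n) : Prop :=
  admN x.2.2.2.1 x.2.2.2.2 x.1 x.2.1 x.2.2.1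

instance Cond_dec (n : ℕ) (x : Fin n × Fin n × Fin n × Fin n × Fin n) :
    Decidable (Cond n x) := by unfold Cond; infer_instance

def tupEquiv (n : ℕ) : {q : PIdx n × TIdx n | AdmQ q} ≃
    {x : Fin n × Fin n × Fin n × Fin n × Fin n // Cond n x} where
  toFun q := ⟨(q.1.2.1.1, q.1.2.1.2.1, q.1.2.1.2.2, q.1.1.1.1, q.1.1.1.2), q.2⟩
  invFun x := ⟨⟨⟨(x.1.2.2.2.1, x.1.2.2.2.2), x.2.1⟩,
    ⟨(x.1.1, x.1.2.1, x.1.2.2.1), x.2.2.1, x.2.2.2.1⟩⟩, x.2⟩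
  left_inv q := rfl
  right_inv x := rfl

lemma card_Adm (n : ℕ) : Nat.card {q : PIdx n × TIdx n | AdmQ q} =
    (Finset.univ.filter (fun x : Fin n × Fin n × Fin n × Fin n × Fin n => Cond n x)).card := by
  rw [Nat.card_congr (tupEquiv n), Nat.card_eq_fintype_card, Fintype.card_subtype]

open Finset in
noncomputable def cZ (n : ℕ) : ℤ := ∑ a ∈ Finset.range n, (a : ℤ)

open Finset

lemma sum_indic_lt (n a : ℕ) (h : a ≤ n) :
    ∑ b ∈ range n, (if b < a then (1 : ℤ) else 0) = a := by
  rw [Finset.sum_boole]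
  have : filter (fun b => b < a) (range n) = range a := by
    ext x; simp only [mem_filter, mem_range]; omega
  rw [this, card_range]

lemma sum_indic_le (n k : ℕ) (h : k < n) :
    ∑ b ∈ range n, (if b ≤ k then (1 : ℤ) else 0) = (k : ℤ) + 1 := by
  rw [Finset.sum_boole]
  have : filter (fun b => b ≤ k) (range n) = range (k + 1) := by
    ext x; simp only [mem_filter, mem_range]; omega
  rw [this, card_range]
  push_cast; ring

lemma sum_indic_eq (n j : ℕ) (h : j < n) (c : ℤ) :
    ∑ b ∈ range n, (if b = j then c else 0) = c := by
  rw [Finset.sum_ite_eq' (range n) j (fun _ => c), if_pos (mem_range.mpr h)]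

lemma sum_b (n i j k a : ℕ) (hi : i < n) (hk : k < j) (hj : j < i) (ha : a < n) :
    ∑ b ∈ range n, (if admN a b i j k then (1 : ℤ) else 0)
      = (a : ℤ) - (if a = i then 1 else 0) - (if a = j then (k : ℤ) + 1 else 0)
        - (if a = k then (k : ℤ) else 0) := by
  have hpt : ∀ b : ℕ, (if admN a b i j k then (1 : ℤ) else 0)
      = (if b < a then (1 : ℤ) else 0)
        - (if a = i then (if b = j then (1 : ℤ) else 0) else 0)
        - (if a = j then (if b ≤ k then (1 : ℤ) else 0) else 0)
        - (if a = k then (if b < a then (1 : ℤ) else 0) else 0) := by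
    intro b; unfold admN; split_ifs <;> omega
  rw [Finset.sum_congr rfl fun b _ => hpt b]
  rw [Finset.sum_sub_distrib, Finset.sum_sub_distrib, Finset.sum_sub_distrib]
  congr 1; rotate_left
  · by_cases h : a = k
    · subst h
      rw [if_pos rfl]
      simp only [if_pos rfl]
      exact sum_indic_lt n a ha.le
    · simp only [if_neg h, Finset.sum_const_zero]
  congr 1; rotate_left
  · by_cases h : a = j
    · simp only [if_pos h]
      exact sum_indic_le n k (by omega)
    · simp only [if_neg h, Finset.sum_const_zero]
  congr 1
  · exact sum_indic_lt n a ha.le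
  · by_cases h : a = i
    · simp only [if_pos h]
      exact sum_indic_eq n j (by omega) 1
    · simp only [if_neg h, Finset.sum_const_zero]

lemma sum_ab (n i j k : ℕ) (hi : i < n) (hk : k < j) (hj : j < i) :
    ∑ a ∈ range n, ∑ b ∈ range n, (if admN a b i j k then (1 : ℤ) else 0)
      = cZ n - 2 * (k : ℤ) - 2 := by
  rw [Finset.sum_congr rfl fun a ha => sum_b n i j k a hi hk hj (mem_range.mp ha)]
  rw [Finset.sum_sub_distrib, Finset.sum_sub_distrib, Finset.sum_sub_distrib]
  rw [sum_indic_eq n i hi 1, sum_indic_eq n j (by omega) ((k : ℤ) + 1),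
    sum_indic_eq n k (by omega) (k : ℤ)]
  unfold cZ
  ring

lemma sum_ab_zero (n i j k : ℕ) (h : ¬(k < j ∧ j < i)) :
    ∑ a ∈ range n, ∑ b ∈ range n, (if admN a b i j k then (1 : ℤ) else 0) = 0 := by
  refine Finset.sum_eq_zero fun a _ => Finset.sum_eq_zero fun b _ => ?_
  rw [if_neg]
  unfold admN
  omega

lemma redk (n i j : ℕ) (hi : i < n) (hj : j < i) :
    ∑ k ∈ range n, ∑ a ∈ range n, ∑ b ∈ range n, (if admN a b i j k then (1 : ℤ) else 0)
      = ∑ k ∈ range j, (cZ n - 2 * (k : ℤ) - 2) := by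
  have h1 : ∀ k ∈ range n,
      ∑ a ∈ range n, ∑ b ∈ range n, (if admN a b i j k then (1 : ℤ) else 0)
        = if k < j then cZ n - 2 * (k : ℤ) - 2 else 0 := by
    intro k _
    by_cases h : k < j
    · rw [if_pos h, sum_ab n i j k hi h hj]
    · rw [if_neg h, sum_ab_zero n i j k (by omega)]
  rw [Finset.sum_congr rfl h1, ← Finset.sum_filter]
  have : filter (fun k => k < j) (range n) = range j := by
    ext x; simp only [mem_filter, mem_range]; omega
  rw [this]

lemma redj (n i : ℕ) (hi : i < n) :
    ∑ j ∈ range n, ∑ k ∈ range n, ∑ a ∈ range n, ∑ b ∈ range n,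
        (if admN a b i j k then (1 : ℤ) else 0)
      = ∑ j ∈ range i, ∑ k ∈ range j, (cZ n - 2 * (k : ℤ) - 2) := by
  have h1 : ∀ j ∈ range n,
      ∑ k ∈ range n, ∑ a ∈ range n, ∑ b ∈ range n, (if admN a b i j k then (1 : ℤ) else 0)
        = if j < i then ∑ k ∈ range j, (cZ n - 2 * (k : ℤ) - 2) else 0 := by
    intro j _
    by_cases h : j < i
    · rw [if_pos h, redk n i j hi h]
    · rw [if_neg h]
      refine Finset.sum_eq_zero fun k _ => sum_ab_zero n i j k (by omega)
  rw [Finset.sum_congr rfl h1, ← Finset.sum_filter]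
  have : filter (fun j => j < i) (range n) = range i := by
    ext x; simp only [mem_filter, mem_range]; omega
  rw [this]

lemma redi (n : ℕ) :
    ∑ i ∈ range n, ∑ j ∈ range n, ∑ k ∈ range n, ∑ a ∈ range n, ∑ b ∈ range n,
        (if admN a b i j k then (1 : ℤ) else 0)
      = ∑ i ∈ range n, ∑ j ∈ range i, ∑ k ∈ range j, (cZ n - 2 * (k : ℤ) - 2) :=
  Finset.sum_congr rfl fun i hi => redj n i (mem_range.mp hi)

lemma E0 (m : ℕ) : 2 * (∑ x ∈ range m, (x : ℤ)) = m * (m - 1) := by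
  induction m with
  | zero => simp
  | succ m ih =>
    rw [Finset.sum_range_succ, mul_add, ih]
    push_cast; ring

lemma E1 (c : ℤ) (m : ℕ) :
    ∑ k ∈ range m, (c - 2 * (k : ℤ) - 2) = m * c - m * m - m := by
  induction m with
  | zero => simp
  | succ m ih =>
    rw [Finset.sum_range_succ, ih]
    push_cast; ring

lemma E2 (c : ℤ) (m : ℕ) :
    6 * ∑ j ∈ range m, ((j : ℤ) * c - j * j - j)
      = 3 * c * m * (m - 1) - m * (m - 1) * (2 * m - 1) - 3 * m * (m - 1) := by
  induction m with
  | zero => simp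
  | succ m ih =>
    rw [Finset.sum_range_succ, mul_add, ih]
    push_cast; ring

lemma E3 (c : ℤ) (m : ℕ) :
    12 * ∑ i ∈ range m, (∑ j ∈ range i, ((j : ℤ) * c - j * j - j))
      = 2 * c * m * (m - 1) * (m - 2) - m * (m - 1) * (m - 1) * (m - 2)
        - 2 * m * (m - 1) * (m - 2) := by
  induction m with
  | zero => simp
  | succ m ih =>
    rw [Finset.sum_range_succ, mul_add, ih]
    have h2 := E2 c m
    push_cast
    push_cast at h2 ih
    linear_combination 2 * h2
lemma twelve_card (n : ℕ) :
    (12 : ℤ) * (((Finset.univ.filter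
        (fun x : Fin n × Fin n × Fin n × Fin n × Fin n => Cond n x)).card : ℕ) : ℤ)
      = (n : ℤ) * ((n : ℤ) ^ 4 - 5 * (n : ℤ) ^ 3 + 7 * (n : ℤ) ^ 2 - (n : ℤ) - 2) := by
  have hcard : (((Finset.univ.filter
        (fun x : Fin n × Fin n × Fin n × Fin n × Fin n => Cond n x)).card : ℕ) : ℤ)
      = ∑ i ∈ range n, ∑ j ∈ range n, ∑ k ∈ range n, ∑ a ∈ range n, ∑ b ∈ range n,
          (if admN a b i j k then (1 : ℤ) else 0) := by
    have l5 : ∀ a i j k : ℕ, (∑ b : Fin n, if admN a (↑b) i j k then (1 : ℤ) else 0)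
        = ∑ b ∈ range n, if admN a b i j k then (1 : ℤ) else 0 :=
      fun a i j k =>
        Fin.sum_univ_eq_sum_range (fun b => if admN a b i j k then (1 : ℤ) else 0) n
    have l4 : ∀ i j k : ℕ,
        (∑ a : Fin n, ∑ b : Fin n, if admN (↑a) (↑b) i j k then (1 : ℤ) else 0)
        = ∑ a ∈ range n, ∑ b ∈ range n, if admN a b i j k then (1 : ℤ) else 0 := by
      intro i j k
      trans (∑ a : Fin n, ∑ b ∈ range n, if admN (↑a) b i j k then (1 : ℤ) else 0)
      · exact Finset.sum_congr rfl fun a _ => l5 (↑a) i j k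
      exact Fin.sum_univ_eq_sum_range
        (fun a => ∑ b ∈ range n, if admN a b i j k then (1 : ℤ) else 0) n
    have l3 : ∀ i j : ℕ,
        (∑ k : Fin n, ∑ a : Fin n, ∑ b : Fin n, if admN (↑a) (↑b) i j (↑k) then (1 : ℤ) else 0)
        = ∑ k ∈ range n, ∑ a ∈ range n, ∑ b ∈ range n,
            if admN a b i j k then (1 : ℤ) else 0 := by
      intro i j
      trans (∑ k : Fin n, ∑ a ∈ range n, ∑ b ∈ range n,
        if admN a b i j (↑k) then (1 : ℤ) else 0)
      · exact Finset.sum_congr rfl fun k _ => l4 i j (↑k)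
      exact Fin.sum_univ_eq_sum_range
        (fun k => ∑ a ∈ range n, ∑ b ∈ range n, if admN a b i j k then (1 : ℤ) else 0) n
    have l2 : ∀ i : ℕ,
        (∑ j : Fin n, ∑ k : Fin n, ∑ a : Fin n, ∑ b : Fin n,
            if admN (↑a) (↑b) i (↑j) (↑k) then (1 : ℤ) else 0)
        = ∑ j ∈ range n, ∑ k ∈ range n, ∑ a ∈ range n, ∑ b ∈ range n,
            if admN a b i j k then (1 : ℤ) else 0 := by
      intro i
      trans (∑ j : Fin n, ∑ k ∈ range n, ∑ a ∈ range n, ∑ b ∈ range n,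
        if admN a b i (↑j) k then (1 : ℤ) else 0)
      · exact Finset.sum_congr rfl fun j _ => l3 i (↑j)
      exact Fin.sum_univ_eq_sum_range
        (fun j => ∑ k ∈ range n, ∑ a ∈ range n, ∑ b ∈ range n,
          if admN a b i j k then (1 : ℤ) else 0) n
    have l1 :
        (∑ i : Fin n, ∑ j : Fin n, ∑ k : Fin n, ∑ a : Fin n, ∑ b : Fin n,
            if admN (↑a) (↑b) (↑i) (↑j) (↑k) then (1 : ℤ) else 0)
        = ∑ i ∈ range n, ∑ j ∈ range n, ∑ k ∈ range n, ∑ a ∈ range n, ∑ b ∈ range n,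
            if admN a b i j k then (1 : ℤ) else 0 := by
      trans (∑ i : Fin n, ∑ j ∈ range n, ∑ k ∈ range n, ∑ a ∈ range n, ∑ b ∈ range n,
        if admN a b (↑i) j k then (1 : ℤ) else 0)
      · exact Finset.sum_congr rfl fun i _ => l2 (↑i)
      exact Fin.sum_univ_eq_sum_range
        (fun i => ∑ j ∈ range n, ∑ k ∈ range n, ∑ a ∈ range n, ∑ b ∈ range n,
          if admN a b i j k then (1 : ℤ) else 0) n
    rw [Finset.card_filter]
    push_cast
    simp only [Fintype.sum_prod_type, Cond]
    exact l1
  rw [hcard, redi]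
  rw [Finset.sum_congr rfl fun i (_ : i ∈ range n) =>
    Finset.sum_congr rfl fun j (_ : j ∈ range i) => E1 (cZ n) j]
  have h3 := E3 (cZ n) n
  have h0' : 2 * cZ n = (n : ℤ) * ((n : ℤ) - 1) := E0 n
  linear_combination h3 + ((n : ℤ) * ((n : ℤ) - 1) * ((n : ℤ) - 2)) * h0'

end BProof

/-- The set `B` is linearly independent over `ℂ` (hence a minimal generating set of
`span_S(B)`), and its cardinality `m` satisfies `12 m = n(n⁴ − 5n³ + 7n² − n − 2)`. -/
theorem BSet_linearIndependent_card (n : ℕ) (hn : 3 ≤ n) :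
    LinearIndependent ℂ ((↑) : BSet n → Fn n) ∧
    (12 : ℤ) * (Nat.card (BSet n) : ℤ) =
      (n : ℤ) * ((n : ℤ) ^ 4 - 5 * (n : ℤ) ^ 3 + 7 * (n : ℤ) ^ 2 - (n : ℤ) - 2) := by
  refine ⟨BProof.li_BSet n, ?_⟩
  rw [BProof.card_BSet, BProof.card_Adm]
  exact BProof.twelve_card n
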